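/- Fix ε ∈ (0,1), N ≥ 1, R ∈ ℕ, and t ∈ [2R+ε, 2(R+1)−ε]. Assume moreover that m/t ∉ ℤ for every integer m with 1 ≤ m ≤ N−1. Then P_N(t) = det M, where M is the N×N matrix with diagonal entries M_{i,i} = (2R+1)ε/t and off-diagonal entries M_{i,j} = sin((j−i)(2R+1)π/t) · sin((j−i)πε/t) / ( π(j−i) · sin((j−i)π/t) ) for i ≠ j. -/

import Mathlib

open MeasureTheory Real

/-- The squared modulus of the Vandermonde determinant of the points `e^{iθ_k}`:
`Δ(θ) = ∏_{1 ≤ i < j ≤ N} |e^{iθ_i} − e^{iθ_j}|²`. -/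
noncomputable def vdm2 {N : ℕ} (θ : Fin N → ℝ) : ℝ :=
  ∏ i : Fin N, ∏ j ∈ Finset.Ioi i,
    ‖Complex.exp ((θ i : ℂ) * Complex.I) - Complex.exp ((θ j : ℂ) * Complex.I)‖ ^ 2

/-- The set `Ĩ(t) = {θ ∈ [−π,π] : ∃ m ∈ ℤ, |tθ − 2πm| ≤ πε}` of initial angles whose
time-`t` evolution `e^{itθ}` lies in the arc `{e^{is} : |s| ≤ πε}`. -/
def Itil (ε t : ℝ) : Set ℝ :=
  {θ : ℝ | θ ∈ Set.Icc (-π) π ∧ ∃ m : ℤ, |t * θ - 2 * π * m| ≤ π * ε}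

/-- The strong return probability
`P_N(t) = ((2π)^N N!)⁻¹ ∫_{Ĩ(t)^N} ∏_{i<j} |e^{iθ_i} − e^{iθ_j}|² dθ`. -/
noncomputable def Pstrong (ε : ℝ) (N : ℕ) (t : ℝ) : ℝ :=
  ((2 * π) ^ N * (Nat.factorial N : ℝ))⁻¹ *
    ∫ θ in Set.univ.pi (fun _ : Fin N => Itil ε t), vdm2 θ

lemma expdiff (y : ℝ) : Complex.exp ((y:ℂ) * Complex.I) - Complex.exp ((-(y:ℂ)) * Complex.I)
    = 2 * (Real.sin y : ℂ) * Complex.I := by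
  rw [Complex.exp_mul_I, Complex.exp_mul_I, Complex.cos_neg, Complex.sin_neg,
    Complex.ofReal_sin]
  ring

lemma sum_Icc_int_eq_range (R : ℕ) (f : ℤ → ℂ) :
    ∑ m ∈ Finset.Icc (-(R:ℤ)) (R:ℤ), f m = ∑ k ∈ Finset.range (2*R+1), f ((k:ℤ) - R) := by
  refine Finset.sum_nbij' (fun m => (m + R).toNat) (fun k => (k:ℤ) - R) ?_ ?_ ?_ ?_ ?_
  · intro m hm; simp only [Finset.mem_Icc] at hm; simp only [Finset.mem_range]; (try dsimp only); omega
  · intro k hk; simp only [Finset.mem_range] at hk; simp only [Finset.mem_Icc]; (try dsimp only); omega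
  · intro m hm; simp only [Finset.mem_Icc] at hm; (try dsimp only); omega
  · intro k hk; simp only [Finset.mem_range] at hk; (try dsimp only); omega
  · intro m hm; simp only [Finset.mem_Icc] at hm; (try dsimp only); congr 1; omega

lemma exp_two_mul_sub_one (z : ℝ) : Complex.exp (((2*z : ℝ):ℂ) * Complex.I) - 1
    = Complex.exp ((z:ℂ) * Complex.I) * (2 * (Real.sin z : ℂ) * Complex.I) := by
  have h0 : ((2*z:ℝ):ℂ)*Complex.I = (z:ℂ)*Complex.I + (z:ℂ)*Complex.I := by push_cast; ring
  have h1 : ((0:ℂ)) = (z:ℂ)*Complex.I + (-(z:ℂ))*Complex.I := by ring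
  rw [← expdiff z, mul_sub, ← Complex.exp_add, ← h0, ← Complex.exp_add, ← h1, Complex.exp_zero]

lemma dirichlet_sum (x : ℝ) (hx : Real.sin x ≠ 0) (R : ℕ) :
    ∑ m ∈ Finset.Icc (-(R:ℤ)) (R:ℤ), Complex.exp (((2*(m:ℝ)*x : ℝ):ℂ) * Complex.I)
      = ((Real.sin ((2*R+1)*x) / Real.sin x : ℝ) : ℂ) := by
  set q : ℂ := Complex.exp (((2*x : ℝ):ℂ) * Complex.I) with hq
  have hq1 : q - 1 ≠ 0 := by
    rw [hq, exp_two_mul_sub_one x]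
    exact mul_ne_zero (Complex.exp_ne_zero _)
      (mul_ne_zero (mul_ne_zero two_ne_zero (Complex.ofReal_ne_zero.2 hx)) Complex.I_ne_zero)
  apply mul_right_cancel₀ hq1
  have hS : (∑ m ∈ Finset.Icc (-(R:ℤ)) (R:ℤ), Complex.exp (((2*(m:ℝ)*x : ℝ):ℂ) * Complex.I))
      = Complex.exp ((((-2*(R:ℝ))*x : ℝ):ℂ) * Complex.I) * ∑ k ∈ Finset.range (2*R+1), q ^ k := by
    rw [sum_Icc_int_eq_range R (fun m => Complex.exp (((2*(m:ℝ)*x : ℝ):ℂ) * Complex.I))]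
    rw [Finset.mul_sum]
    refine Finset.sum_congr rfl fun k _ => ?_
    rw [hq, ← Complex.exp_nat_mul, ← Complex.exp_add]
    congr 1
    push_cast
    ring
  rw [hS, mul_assoc, geom_sum_mul]
  have h2 : q ^ (2*R+1) = Complex.exp ((((2*(2*(R:ℝ)+1))*x :ℝ):ℂ) * Complex.I) := by
    rw [hq, ← Complex.exp_nat_mul]; congr 1; push_cast; ring
  have hL : Complex.exp ((((-2*(R:ℝ))*x : ℝ):ℂ) * Complex.I) * (q ^ (2*R+1) - 1)
      = Complex.exp ((x:ℂ) * Complex.I) * (2 * (Real.sin ((2*(R:ℝ)+1)*x) : ℂ) * Complex.I) := by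
    rw [h2, ← expdiff ((2*(R:ℝ)+1)*x), mul_sub, mul_sub, mul_one, ← Complex.exp_add,
      ← Complex.exp_add, ← Complex.exp_add]
    congr 1
    · congr 1; push_cast; ring
    · congr 1; push_cast; ring
  rw [hL]
  have hqk : q - 1 = Complex.exp ((x:ℂ) * Complex.I) * (2 * (Real.sin x : ℂ) * Complex.I) := by
    rw [hq, exp_two_mul_sub_one x]
  rw [hqk, Complex.ofReal_div]
  have hsx : (Real.sin x : ℂ) ≠ 0 := Complex.ofReal_ne_zero.2 hx
  have hsx' : Complex.sin (x:ℂ) ≠ 0 := by rwa [← Complex.ofReal_sin]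
  have hcast : ((2*(R:ℕ)+1 : ℝ)) = (2*(R:ℝ)+1) := by push_cast; ring
  rw [hcast]
  field_simp [hsx']

noncomputable def arcL (ε t : ℝ) (m : ℤ) : ℝ := (2*π*m - π*ε)/t
noncomputable def arcR (ε t : ℝ) (m : ℤ) : ℝ := (2*π*m + π*ε)/t

noncomputable def Uset (ε t : ℝ) (R : ℕ) : Set ℝ :=
  ⋃ m ∈ Finset.Icc (-(R:ℤ)) (R:ℤ), Set.Icc (arcL ε t m) (arcR ε t m)

noncomputable def Cint (ε t : ℝ) (R : ℕ) (n : ℤ) : ℂ :=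
  ∫ θ in Uset ε t R, Complex.exp ((n:ℂ) * θ * Complex.I)

lemma uset_measurable (ε t : ℝ) (R : ℕ) : MeasurableSet (Uset ε t R) :=
  MeasurableSet.biUnion (Set.to_countable _) fun _ _ => measurableSet_Icc

lemma mem_arc_iff {t : ℝ} (ht0 : 0 < t) (ε : ℝ) (m : ℤ) (θ : ℝ) :
    θ ∈ Set.Icc (arcL ε t m) (arcR ε t m) ↔ |t*θ - 2*π*m| ≤ π*ε := by
  rw [Set.mem_Icc, abs_le, arcL, arcR, div_le_iff₀ ht0, le_div_iff₀ ht0]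
  constructor <;> rintro ⟨h1,h2⟩ <;> constructor <;> nlinarith

section Main
variable {ε t : ℝ} {R : ℕ}
  (hε0 : 0 < ε) (hε1 : ε < 1) (ht1 : 2*(R:ℝ) + ε ≤ t) (ht2 : t ≤ 2*((R:ℝ)+1) - ε)

include hε0 ht1 in
lemma ht0' : 0 < t := lt_of_lt_of_le (by positivity) ht1

include hε0 ht1 in
lemma uset_subset_Icc : Uset ε t R ⊆ Set.Icc (-π) π := by
  intro θ hθ
  rw [Uset, Set.mem_iUnion₂] at hθ
  obtain ⟨m, hm, hθ⟩ := hθ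
  rw [Finset.mem_Icc] at hm
  have hm1 : (m:ℝ) ≤ R := by exact_mod_cast hm.2
  have hm2 : -(R:ℝ) ≤ m := by exact_mod_cast hm.1
  have h0 := ht0' hε0 ht1
  rw [Set.mem_Icc] at hθ ⊢
  rw [arcL, arcR, div_le_iff₀ h0, le_div_iff₀ h0] at hθ
  have hπ := Real.pi_pos
  constructor <;> nlinarith [hθ.1, hθ.2]

include hε0 ht1 in
lemma uset_subset_Itil : Uset ε t R ⊆ Itil ε t := by
  intro θ hθ
  refine ⟨uset_subset_Icc hε0 ht1 hθ, ?_⟩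
  rw [Uset, Set.mem_iUnion₂] at hθ
  obtain ⟨m, hm, hθ⟩ := hθ
  exact ⟨m, (mem_arc_iff (ht0' hε0 ht1) ε m θ).1 hθ⟩

include hε0 ht1 ht2 in
lemma Itil_diff_uset : Itil ε t \ Uset ε t R ⊆ {-π, π} := by
  intro θ ⟨⟨hθI, m, hθm⟩, hθU⟩
  simp only [Set.mem_insert_iff, Set.mem_singleton_iff]
  have h0 := ht0' hε0 ht1
  have hπ := Real.pi_pos
  rw [Set.mem_Icc] at hθI
  by_cases hm : m ∈ Finset.Icc (-(R:ℤ)) (R:ℤ)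
  · exfalso
    exact hθU (Set.mem_iUnion₂.2 ⟨m, hm, (mem_arc_iff h0 ε m θ).2 hθm⟩)
  · rw [Finset.mem_Icc, not_and_or, not_le, not_le] at hm
    rw [abs_le] at hθm
    rcases hm with hm | hm
    · -- m < -R, i.e. m ≤ -R-1 : θ = -π
      have hm' : (m:ℝ) ≤ -(R:ℝ) - 1 := by
        have : m ≤ -(R:ℤ) - 1 := by omega
        exact_mod_cast this
      have h2 : θ ≤ -π := by nlinarith [hθm.2]
      exact Or.inl (le_antisymm h2 hθI.1)
    · have hm' : (R:ℝ) + 1 ≤ m := by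
        have : (R:ℤ) + 1 ≤ m := by omega
        exact_mod_cast this
      have h2 : π ≤ θ := by nlinarith [hθm.1]
      exact Or.inr (le_antisymm hθI.2 h2)
include hε1 ht1 hε0 in
lemma arcs_disjoint :
    (↑(Finset.Icc (-(R:ℤ)) (R:ℤ)) : Set ℤ).Pairwise
      (Function.onFun Disjoint fun m => Set.Icc (arcL ε t m) (arcR ε t m)) := by
  have h0 := ht0' hε0 ht1
  have hπ := Real.pi_pos
  have key : ∀ m m' : ℤ, m < m' → Disjoint (Set.Icc (arcL ε t m) (arcR ε t m))
      (Set.Icc (arcL ε t m') (arcR ε t m')) := by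
    intro m m' hmm
    apply Set.disjoint_left.2
    intro x hx hx'
    have hlt : arcR ε t m < arcL ε t m' := by
      rw [arcR, arcL, div_lt_div_iff₀ h0 h0]
      have h1 : (m:ℝ) + 1 ≤ m' := by exact_mod_cast hmm
      apply mul_lt_mul_of_pos_right _ h0
      have hπ := Real.pi_pos
      linarith [mul_le_mul_of_nonneg_left h1 hπ.le, mul_lt_mul_of_pos_left hε1 hπ]
    exact absurd (lt_of_le_of_lt hx.2 (lt_of_lt_of_le hlt hx'.1)) (lt_irrefl x)
  intro m _ m' _ hne
  rcases lt_or_gt_of_ne hne with h | h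
  · exact key m m' h
  · exact (key m' m h).symm

lemma exp_int_continuous (n : ℤ) : Continuous fun θ:ℝ => Complex.exp ((n:ℂ) * θ * Complex.I) := by
  fun_prop

include hε0 hε1 ht1 in
lemma cint_eq_sum (n : ℤ) : Cint ε t R n
    = ∑ m ∈ Finset.Icc (-(R:ℤ)) (R:ℤ),
        ∫ θ in Set.Icc (arcL ε t m) (arcR ε t m), Complex.exp ((n:ℂ) * θ * Complex.I) := by
  rw [Cint, Uset]
  rw [integral_biUnion_finset]
  · exact fun _ _ => measurableSet_Icc
  · exact arcs_disjoint hε0 hε1 ht1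
  · exact fun m _ => (exp_int_continuous n).integrableOn_Icc

include hε0 ht1 in
lemma arc_le (m : ℤ) : arcL ε t m ≤ arcR ε t m := by
  have h0 := ht0' hε0 ht1
  have hπ := Real.pi_pos
  rw [arcL, arcR, div_le_div_iff₀ h0 h0]
  apply mul_le_mul_of_nonneg_right _ h0.le
  linarith [mul_pos hπ hε0]

include hε0 hε1 ht1 in
lemma cint_zero : Cint ε t R 0 = (((2*(R:ℝ)+1) * (2*π*ε/t) : ℝ) : ℂ) := by
  have h0 := ht0' hε0 ht1
  have hπ := Real.pi_pos
  rw [cint_eq_sum hε0 hε1 ht1]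
  have hone : ∀ m : ℤ, ∫ θ in Set.Icc (arcL ε t m) (arcR ε t m),
      Complex.exp (((0:ℤ):ℂ) * θ * Complex.I) = ((2*π*ε/t : ℝ) : ℂ) := by
    intro m
    simp only [Int.cast_zero, zero_mul, Complex.exp_zero]
    rw [setIntegral_const]
    rw [Real.volume_real_Icc_of_le (arc_le (R := R) hε0 ht1 m)]
    rw [Complex.real_smul, mul_one]
    norm_cast
    rw [arcR, arcL]
    field_simp
    ring
  rw [Finset.sum_congr rfl fun m _ => hone m, Finset.sum_const]
  rw [Int.card_Icc]
  have hcard : ((R:ℤ) + 1 - -(R:ℤ)).toNat = 2*R+1 := by omega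
  rw [hcard]
  push_cast
  ring

include hε0 hε1 ht1 in
lemma cint_ne_zero (n : ℤ) (hn : n ≠ 0) (hs : Real.sin ((n:ℝ)*π/t) ≠ 0) :
    Cint ε t R n = (((Real.sin ((2*(R:ℝ)+1)*((n:ℝ)*π/t)) / Real.sin ((n:ℝ)*π/t))
      * (2 * Real.sin ((n:ℝ)*π*ε/t) / n) : ℝ) : ℂ) := by
  have h0 := ht0' hε0 ht1
  have hπ := Real.pi_pos
  have hnC : ((n:ℂ)) ≠ 0 := Int.cast_ne_zero.2 hn
  have hnR : ((n:ℝ)) ≠ 0 := Int.cast_ne_zero.2 hn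
  rw [cint_eq_sum hε0 hε1 ht1]
  have harc : ∀ m : ℤ, ∫ θ in Set.Icc (arcL ε t m) (arcR ε t m),
      Complex.exp ((n:ℂ) * θ * Complex.I)
      = Complex.exp (((2*(m:ℝ)*((n:ℝ)*π/t) : ℝ):ℂ) * Complex.I)
          * ((2 * Real.sin ((n:ℝ)*π*ε/t) / n : ℝ) : ℂ) := by
    intro m
    have hc : ((n:ℂ) * Complex.I) ≠ 0 := mul_ne_zero hnC Complex.I_ne_zero
    have hfun : ∀ θ:ℝ, Complex.exp ((n:ℂ) * θ * Complex.I)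
        = Complex.exp (((n:ℂ) * Complex.I) * θ) := fun θ => by ring_nf
    rw [setIntegral_congr_fun measurableSet_Icc (fun θ _ => hfun θ)]
    rw [MeasureTheory.integral_Icc_eq_integral_Ioc,
      ← intervalIntegral.integral_of_le (arc_le hε0 ht1 m),
      integral_exp_mul_complex hc]
    have eR : ((n:ℂ) * Complex.I) * (arcR ε t m : ℂ)
        = ((2*(m:ℝ)*((n:ℝ)*π/t) + (n:ℝ)*π*ε/t : ℝ):ℂ) * Complex.I := by
      rw [arcR]; push_cast; field_simp
    have eL : ((n:ℂ) * Complex.I) * (arcL ε t m : ℂ)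
        = ((2*(m:ℝ)*((n:ℝ)*π/t) - (n:ℝ)*π*ε/t : ℝ):ℂ) * Complex.I := by
      rw [arcL]; push_cast; field_simp
    rw [eR, eL]
    have e1 : ((2*(m:ℝ)*((n:ℝ)*π/t) + (n:ℝ)*π*ε/t : ℝ):ℂ) * Complex.I
        = ((2*(m:ℝ)*((n:ℝ)*π/t) : ℝ):ℂ) * Complex.I + (((n:ℝ)*π*ε/t : ℝ):ℂ) * Complex.I := by
      push_cast; ring
    have e2 : ((2*(m:ℝ)*((n:ℝ)*π/t) - (n:ℝ)*π*ε/t : ℝ):ℂ) * Complex.I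
        = ((2*(m:ℝ)*((n:ℝ)*π/t) : ℝ):ℂ) * Complex.I + (-(((n:ℝ)*π*ε/t : ℝ):ℂ)) * Complex.I := by
      push_cast; ring
    rw [e1, e2, Complex.exp_add, Complex.exp_add, ← mul_sub, expdiff]
    rw [mul_div_assoc]
    congr 1
    push_cast
    have : Complex.I ≠ 0 := Complex.I_ne_zero
    field_simp
  rw [Finset.sum_congr rfl fun m _ => harc m, ← Finset.sum_mul]
  rw [dirichlet_sum ((n:ℝ)*π/t) hs R]
  rw [← Complex.ofReal_mul]

end Main

lemma vdm2_expand {N : ℕ} (θ : Fin N → ℝ) :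
    ((vdm2 θ : ℝ) : ℂ) = ∑ σ : Equiv.Perm (Fin N), ∑ τ : Equiv.Perm (Fin N),
      (((Equiv.Perm.sign σ : ℤ) : ℂ) * ((Equiv.Perm.sign τ : ℤ) : ℂ)) *
        ∏ i, Complex.exp ((↑((((σ i : ℕ) : ℤ)) - (((τ i : ℕ)) : ℤ)) : ℂ) * (θ i) * Complex.I) := by
  classical
  set E : Fin N → ℂ := fun i => Complex.exp ((θ i : ℂ) * Complex.I) with hE
  have key : ∀ z : ℂ, ((‖z‖ ^ 2 : ℝ) : ℂ) = z * (starRingEnd ℂ) z := by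
    intro z
    rw [Complex.sq_norm, Complex.mul_conj]
  have step1 : ((vdm2 θ : ℝ) : ℂ)
      = ∏ i : Fin N, ∏ j ∈ Finset.Ioi i, ((E j - E i) * (starRingEnd ℂ) (E j - E i)) := by
    rw [vdm2, Complex.ofReal_prod]
    refine Finset.prod_congr rfl fun i _ => ?_
    rw [Complex.ofReal_prod]
    refine Finset.prod_congr rfl fun j _ => ?_
    rw [← key (E j - E i)]
    congr 2
    rw [norm_sub_rev]
  have step2 : ((vdm2 θ : ℝ) : ℂ)
      = (Matrix.vandermonde E).det * (starRingEnd ℂ) (Matrix.vandermonde E).det := by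
    rw [step1]
    simp_rw [Finset.prod_mul_distrib]
    rw [Matrix.det_vandermonde E]
    congr 1
    rw [map_prod]
    refine Finset.prod_congr rfl fun i _ => ?_
    rw [map_prod]
  have det_eq : (Matrix.vandermonde E).det
      = ∑ σ : Equiv.Perm (Fin N), ((Equiv.Perm.sign σ : ℤ) : ℂ) * ∏ i, E i ^ ((σ i : ℕ)) := by
    rw [← Matrix.det_transpose, Matrix.det_apply']
    simp [Matrix.vandermonde]
  have conj_det : (starRingEnd ℂ) (Matrix.vandermonde E).det
      = ∑ τ : Equiv.Perm (Fin N), ((Equiv.Perm.sign τ : ℤ) : ℂ)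
          * ∏ i, (Complex.exp (-((θ i : ℂ) * Complex.I))) ^ ((τ i : ℕ)) := by
    rw [det_eq, map_sum]
    refine Finset.sum_congr rfl fun τ _ => ?_
    rw [map_mul, map_prod]
    congr 1
    · exact map_intCast (starRingEnd ℂ) _
    · refine Finset.prod_congr rfl fun i _ => ?_
      rw [map_pow]
      congr 1
      rw [← Complex.exp_conj]
      congr 1
      simp [Complex.conj_ofReal]
  rw [step2, conj_det, det_eq, Finset.sum_mul_sum]
  refine Finset.sum_congr rfl fun σ _ => Finset.sum_congr rfl fun τ _ => ?_
  rw [mul_mul_mul_comm, ← Finset.prod_mul_distrib]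
  congr 1
  refine Finset.prod_congr rfl fun i _ => ?_
  rw [← Complex.exp_nat_mul, ← Complex.exp_nat_mul, ← Complex.exp_add]
  congr 1
  push_cast
  ring

lemma andreief_sum {N : ℕ} (c : ℤ → ℂ) :
    (∑ σ : Equiv.Perm (Fin N), ∑ τ : Equiv.Perm (Fin N),
      (((Equiv.Perm.sign σ : ℤ) : ℂ) * ((Equiv.Perm.sign τ : ℤ) : ℂ)) *
        ∏ i, c (((σ i : ℕ) : ℤ) - ((τ i : ℕ) : ℤ)))
    = (N.factorial : ℂ) *
        (Matrix.of fun k l : Fin N => c (((k : ℕ) : ℤ) - ((l : ℕ) : ℤ))).det := by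
  classical
  rw [Finset.sum_comm]
  have inner : ∀ τ : Equiv.Perm (Fin N),
      (∑ σ : Equiv.Perm (Fin N),
        (((Equiv.Perm.sign σ : ℤ) : ℂ) * ((Equiv.Perm.sign τ : ℤ) : ℂ)) *
          ∏ i, c (((σ i : ℕ) : ℤ) - ((τ i : ℕ) : ℤ)))
      = (Matrix.of fun k l : Fin N => c (((k : ℕ) : ℤ) - ((l : ℕ) : ℤ))).det := by
    intro τ
    rw [Matrix.det_apply']
    refine Fintype.sum_equiv (Equiv.mulRight τ⁻¹) _ _ fun σ => ?_
    simp only [Equiv.coe_mulRight, Matrix.of_apply]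
    have hsign : ((Equiv.Perm.sign (σ * τ⁻¹) : ℤ) : ℂ)
        = ((Equiv.Perm.sign σ : ℤ) : ℂ) * ((Equiv.Perm.sign τ : ℤ) : ℂ) := by
      rw [Equiv.Perm.sign_mul, Equiv.Perm.sign_inv]
      push_cast
      ring
    rw [hsign]
    congr 1
    rw [← Equiv.prod_comp τ (fun j => c ((((σ * τ⁻¹) j : ℕ) : ℤ) - ((j : ℕ) : ℤ)))]
    refine Finset.prod_congr rfl fun i _ => ?_
    simp
  simp_rw [inner]
  rw [Finset.sum_const, Finset.card_univ, Fintype.card_perm, Fintype.card_fin, nsmul_eq_mul]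

lemma integral_pi_prod {N : ℕ} (S : Set ℝ) (hS : MeasurableSet S) (f : Fin N → ℝ → ℂ) :
    (∫ θ in Set.univ.pi (fun _ : Fin N => S), ∏ i, f i (θ i))
      = ∏ i, ∫ x in S, f i x := by
  rw [← integral_indicator (MeasurableSet.univ_pi fun _ => hS)]
  have key : ∀ θ : Fin N → ℝ, (Set.univ.pi fun _ : Fin N => S).indicator
      (fun θ : Fin N → ℝ => ∏ i, f i (θ i)) θ = ∏ i, S.indicator (f i) (θ i) := by
    intro θ
    by_cases h : θ ∈ Set.univ.pi fun _ : Fin N => S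
    · rw [Set.indicator_of_mem h]
      exact Finset.prod_congr rfl fun i _ =>
        (Set.indicator_of_mem (h i (Set.mem_univ i)) _).symm
    · rw [Set.indicator_of_notMem h]
      rw [Set.mem_pi] at h
      push_neg at h
      obtain ⟨i, _, hi⟩ := h
      exact (Finset.prod_eq_zero (Finset.mem_univ i) (Set.indicator_of_notMem hi _)).symm
  simp_rw [key]
  rw [MeasureTheory.volume_pi, MeasureTheory.integral_fintype_prod_eq_prod (fun i => S.indicator (f i))]
  exact Finset.prod_congr rfl fun i _ => integral_indicator hS

lemma term_integrable {N : ℕ} (S : Set (Fin N → ℝ)) (hvol : volume S ≠ ⊤)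
    (c : ℂ) (n : Fin N → ℤ) :
    Integrable (fun θ : Fin N → ℝ => c * ∏ i, Complex.exp ((n i : ℂ) * θ i * Complex.I))
      (volume.restrict S) := by
  haveI : IsFiniteMeasure (volume.restrict S) := by
    constructor
    rw [Measure.restrict_apply_univ]
    exact lt_top_iff_ne_top.2 hvol
  have hcont : Continuous fun θ : Fin N → ℝ =>
      c * ∏ i, Complex.exp ((n i : ℂ) * θ i * Complex.I) := by fun_prop
  refine Integrable.mono' (integrable_const ‖c‖) hcont.aestronglyMeasurable ?_
  filter_upwards with θ
  rw [norm_mul]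
  have : ‖∏ i, Complex.exp ((n i : ℂ) * θ i * Complex.I)‖ = 1 := by
    rw [norm_prod]
    refine Finset.prod_eq_one fun i _ => ?_
    rw [Complex.norm_exp]
    simp
  rw [this, mul_one]

/-- For `ε ∈ (0,1)`, `N ≥ 1`, `R ∈ ℕ`, `t ∈ [2R+ε, 2(R+1)−ε]`, and assuming
`m/t ∉ ℤ` for all integers `1 ≤ m ≤ N−1`, one has `P_N(t) = det M` where
`M_{i,i} = (2R+1)ε/t` and, for `i ≠ j`,
`M_{i,j} = sin((j−i)(2R+1)π/t) sin((j−i)πε/t) / (π(j−i) sin((j−i)π/t))`. -/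
theorem stmt5 (ε : ℝ) (hε : ε ∈ Set.Ioo (0 : ℝ) 1) (N : ℕ) (hN : 1 ≤ N) (R : ℕ) (t : ℝ)
    (ht : t ∈ Set.Icc (2 * (R : ℝ) + ε) (2 * ((R : ℝ) + 1) - ε))
    (hnres : ∀ m : ℕ, 1 ≤ m → m ≤ N - 1 → ∀ p : ℤ, (m : ℝ) / t ≠ (p : ℝ)) :
    Pstrong ε N t = Matrix.det (Matrix.of fun i j : Fin N =>
      if i = j then (2 * (R : ℝ) + 1) * ε / t
      else Real.sin (((j.val : ℝ) - (i.val : ℝ)) * (2 * (R : ℝ) + 1) * π / t) *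
             Real.sin (((j.val : ℝ) - (i.val : ℝ)) * π * ε / t) /
           (π * ((j.val : ℝ) - (i.val : ℝ)) *
             Real.sin (((j.val : ℝ) - (i.val : ℝ)) * π / t))) := by
  classical
  obtain ⟨hε0, hε1⟩ := hε
  obtain ⟨ht1, ht2⟩ := ht
  have h0 : 0 < t := ht0' hε0 ht1
  have hπ := Real.pi_pos
  set MR : Matrix (Fin N) (Fin N) ℝ := Matrix.of fun i j : Fin N =>
      if i = j then (2 * (R : ℝ) + 1) * ε / t
      else Real.sin (((j.val : ℝ) - (i.val : ℝ)) * (2 * (R : ℝ) + 1) * π / t) *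
             Real.sin (((j.val : ℝ) - (i.val : ℝ)) * π * ε / t) /
           (π * ((j.val : ℝ) - (i.val : ℝ)) *
             Real.sin (((j.val : ℝ) - (i.val : ℝ)) * π / t)) with hMR
  -- non-resonance gives nonvanishing sines
  have hsin_ne : ∀ d : ℤ, d ≠ 0 → d.natAbs ≤ N - 1 → Real.sin ((d:ℝ)*π/t) ≠ 0 := by
    intro d hd hdN hsin
    rw [Real.sin_eq_zero_iff] at hsin
    obtain ⟨p, hp⟩ := hsin
    have hπ0 := Real.pi_ne_zero
    have h1 : (p:ℝ) * t = (d:ℝ) := by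
      have h2 : (p:ℝ) * π * t = (d:ℝ) * π := by
        field_simp at hp
        rw [← hp]; ring
      have h3 : ((p:ℝ) * t) * π = (d:ℝ) * π := by linarith [h2]
      exact mul_right_cancel₀ hπ0 h3
    rcases lt_or_gt_of_ne hd with hneg | hpos
    · refine hnres d.natAbs (by omega) hdN (-p) ?_
      have habs : ((d.natAbs : ℕ) : ℝ) = -(d:ℝ) := by
        push_cast [Nat.cast_natAbs, Int.cast_abs]
        exact abs_of_neg (by exact_mod_cast hneg)
      rw [habs, ← h1]
      push_cast
      field_simp
    · refine hnres d.natAbs (by omega) hdN p ?_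
      have habs : ((d.natAbs : ℕ) : ℝ) = (d:ℝ) := by
        push_cast [Nat.cast_natAbs, Int.cast_abs]
        exact abs_of_pos (by exact_mod_cast hpos)
      rw [habs, ← h1]
      field_simp
  -- entrywise identification of the C-matrix
  have hmat : ∀ k l : Fin N, Cint ε t R (((k:ℕ):ℤ) - ((l:ℕ):ℤ))
      = ((2*π * MR l k : ℝ) : ℂ) := by
    intro k l
    by_cases hkl : k = l
    · subst hkl
      rw [sub_self, cint_zero hε0 hε1 ht1, hMR]
      simp only [Matrix.of_apply, if_pos rfl, eq_self_iff_true, if_true]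
      norm_cast
      field_simp
    · set d : ℤ := ((k:ℕ):ℤ) - ((l:ℕ):ℤ) with hd_def
      have hd : d ≠ 0 := by
        intro h
        apply hkl
        apply Fin.ext
        omega
      have hdN : d.natAbs ≤ N - 1 := by
        have := k.isLt
        have := l.isLt
        omega
      have hs := hsin_ne d hd hdN
      rw [cint_ne_zero hε0 hε1 ht1 d hd hs, hMR]
      simp only [Matrix.of_apply, if_neg (Ne.symm hkl)]
      congr 1
      have hcast : ((d:ℤ):ℝ) = ((k:ℕ):ℝ) - ((l:ℕ):ℝ) := by
        rw [hd_def]; push_cast; ring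
      rw [← hcast]
      have ha : ((d:ℝ))*(2*(R:ℝ)+1)*π/t = (2*(R:ℝ)+1)*((d:ℝ)*π/t) := by ring
      rw [ha]
      have hdR : ((d:ℤ):ℝ) ≠ 0 := Int.cast_ne_zero.2 hd
      field_simp
  -- determinant identification
  have hDmat : (Matrix.of fun k l : Fin N => Cint ε t R (((k:ℕ):ℤ) - ((l:ℕ):ℤ))).det
      = (((2*π)^N * MR.det : ℝ) : ℂ) := by
    have : (Matrix.of fun k l : Fin N => Cint ε t R (((k:ℕ):ℤ) - ((l:ℕ):ℤ)))
        = Complex.ofRealHom.mapMatrix ((2*π) • MR.transpose) := by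
      ext k l
      rw [Matrix.of_apply, hmat k l]
      simp [Matrix.smul_apply, Matrix.transpose_apply]
    rw [this, ← RingHom.map_det]
    rw [Matrix.det_smul, Matrix.det_transpose, Fintype.card_fin]
    norm_cast
  -- the volume of the pi-set is finite
  have hSvol : volume (Set.univ.pi fun _ : Fin N => Uset ε t R) ≠ ⊤ := by
    rw [MeasureTheory.volume_pi, Measure.pi_pi]
    refine (ENNReal.prod_lt_top fun i _ => ?_).ne
    exact lt_of_le_of_lt (measure_mono (uset_subset_Icc hε0 ht1)) measure_Icc_lt_top
  -- main integral computation
  have hJ : ((∫ θ in Set.univ.pi (fun _ : Fin N => Itil ε t), vdm2 θ : ℝ) : ℂ)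
      = (N.factorial : ℂ) *
        (Matrix.of fun k l : Fin N => Cint ε t R (((k:ℕ):ℤ) - ((l:ℕ):ℤ))).det := by
    have hae : (volume : Measure (Fin N → ℝ)).restrict (Set.univ.pi fun _ : Fin N => Itil ε t)
        = volume.restrict (Set.univ.pi fun _ : Fin N => Uset ε t R) := by
      apply Measure.restrict_congr_set
      rw [MeasureTheory.ae_eq_set]
      constructor
      · refine measure_mono_null (t := ⋃ i : Fin N, Function.eval i ⁻¹' ({-π, π} : Set ℝ))
          ?_ ?_
        · rintro θ ⟨hI, hU⟩
          rw [Set.mem_pi] at hU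
          push_neg at hU
          obtain ⟨i, _, hi⟩ := hU
          refine Set.mem_iUnion.2 ⟨i, ?_⟩
          exact Itil_diff_uset hε0 ht1 ht2 ⟨hI i (Set.mem_univ i), hi⟩
        · refine measure_iUnion_null fun i => ?_
          rw [MeasureTheory.volume_pi]
          refine Measure.pi_eval_preimage_null _ ?_
          exact ((Set.finite_singleton π).insert (-π)).measure_zero _
      · rw [Set.diff_eq_empty.2 (Set.pi_mono fun i _ => uset_subset_Itil hε0 ht1),
          measure_empty]
    rw [show (∫ θ in Set.univ.pi (fun _ : Fin N => Itil ε t), vdm2 θ)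
        = ∫ θ in Set.univ.pi (fun _ : Fin N => Uset ε t R), vdm2 θ by rw [hae]]
    have hOR : ((∫ θ in Set.univ.pi (fun _ : Fin N => Uset ε t R), vdm2 θ : ℝ) : ℂ)
        = ∫ θ in Set.univ.pi (fun _ : Fin N => Uset ε t R), ((vdm2 θ : ℝ) : ℂ) :=
      (integral_ofReal (f := fun θ => vdm2 θ)).symm
    rw [hOR]
    simp_rw [vdm2_expand]
    rw [integral_finset_sum _ (fun σ _ => integrable_finset_sum _
      (fun τ _ => term_integrable _ hSvol _ _))]
    have hstep : ∀ σ : Equiv.Perm (Fin N),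
        (∫ θ in Set.univ.pi (fun _ : Fin N => Uset ε t R),
          ∑ τ : Equiv.Perm (Fin N),
            (((Equiv.Perm.sign σ : ℤ) : ℂ) * ((Equiv.Perm.sign τ : ℤ) : ℂ)) *
              ∏ i, Complex.exp ((↑((((σ i : ℕ) : ℤ)) - (((τ i : ℕ)) : ℤ)) : ℂ) * (θ i) * Complex.I))
        = ∑ τ : Equiv.Perm (Fin N),
            (((Equiv.Perm.sign σ : ℤ) : ℂ) * ((Equiv.Perm.sign τ : ℤ) : ℂ)) *
              ∏ i, Cint ε t R (((σ i : ℕ) : ℤ) - ((τ i : ℕ) : ℤ)) := by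
      intro σ
      rw [integral_finset_sum _ (fun τ _ => term_integrable _ hSvol _ _)]
      refine Finset.sum_congr rfl fun τ _ => ?_
      rw [MeasureTheory.integral_const_mul]
      congr 1
      rw [integral_pi_prod (Uset ε t R) (uset_measurable ε t R)
        (fun i x => Complex.exp ((↑((((σ i : ℕ) : ℤ)) - (((τ i : ℕ)) : ℤ)) : ℂ) * x * Complex.I))]
      rfl
    simp_rw [hstep]
    exact andreief_sum _
  -- final assembly
  have hJreal : (∫ θ in Set.univ.pi (fun _ : Fin N => Itil ε t), vdm2 θ)
      = (N.factorial : ℝ) * ((2*π)^N * MR.det) := by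
    have h := hJ
    rw [hDmat] at h
    have h2 : ((∫ θ in Set.univ.pi (fun _ : Fin N => Itil ε t), vdm2 θ : ℝ) : ℂ)
        = (((N.factorial : ℝ) * ((2*π)^N * MR.det) : ℝ) : ℂ) := by
      rw [h]; push_cast; ring
    exact_mod_cast h2
  rw [Pstrong, hJreal]
  have hf : (N.factorial : ℝ) ≠ 0 := Nat.cast_ne_zero.2 (Nat.factorial_ne_zero N)
  have h2π : ((2*π)^N : ℝ) ≠ 0 := pow_ne_zero _ (by positivity)
  field_simp
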